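/- arXiv:math/9703211 — 4 statements merged into one kernel-verified Lean document; each statement's English description precedes it below -/
import Mathlib

section
/- Any elementary boundary trail crossing exactly m bridges and exactly n lakes satisfies (m,n) ∈ {(4,0), (3,0), (2,1), (1,2), (0,2), (0,3), (0,4)}. -/
/-- An elementary boundary trail on the four islands `Fin 4`: a nonempty cyclic
sequence of `n + 1` steps.  Step `i` goes from island `src i` to island
`src (i + 1)` (indices cyclic, via `Fin (n+1)` addition) and carries a label
`label i`, which is a bridge (a 2-element subset of `Fin 4`) when
`isBridge i = true` and a lake (a 3-element subset of `Fin 4`) when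
`isBridge i = false`.  Each step joins two distinct islands of its label,
distinct steps carry distinct labels, and no bridge label occurring in the
trail is contained in a lake label occurring in the trail. -/
structure ElemBoundaryTrail where
  /-- the trail has `n + 1` steps -/
  n : ℕ
  /-- the island at which step `i` starts (step `i` ends at `src (i + 1)`) -/
  src : Fin (n + 1) → Fin 4
  /-- whether step `i` is labeled by a bridge (`true`) or by a lake (`false`) -/
  isBridge : Fin (n + 1) → Bool
  /-- the label of step `i`, a subset of the islands -/
  label : Fin (n + 1) → Finset (Fin 4)
  /-- a bridge is a 2-element subset of the islands -/
  bridge_card : ∀ i, isBridge i = true → (label i).card = 2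
  /-- a lake is a 3-element subset of the islands -/
  lake_card : ∀ i, isBridge i = false → (label i).card = 3
  /-- each step starts at an island of its label -/
  src_mem : ∀ i, src i ∈ label i
  /-- each step ends at an island of its label -/
  dst_mem : ∀ i, src (i + 1) ∈ label i
  /-- each step joins two distinct islands -/
  step_ne : ∀ i, src i ≠ src (i + 1)
  /-- distinct steps carry distinct labels -/
  label_injective : Function.Injective label
  /-- no bridge label of the trail is contained in a lake label of the trail -/
  no_bridge_in_lake : ∀ i j, isBridge i = true → isBridge j = false →
    ¬ label i ⊆ label j

/-- The number of bridges crossed by the trail (each at most once, since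
labels are distinct). -/
def ElemBoundaryTrail.bridgeCount (T : ElemBoundaryTrail) : ℕ :=
  (Finset.univ.filter fun i => T.isBridge i = true).card

/-- The number of lakes crossed by the trail (each at most once, since
labels are distinct). -/
def ElemBoundaryTrail.lakeCount (T : ElemBoundaryTrail) : ℕ :=
  (Finset.univ.filter fun i => T.isBridge i = false).card

namespace ElemBoundaryTrail
open Finset
variable (T : ElemBoundaryTrail)

lemma steps_eq : (Finset.univ.filter fun i => T.isBridge i = true).card
    + (Finset.univ.filter fun i => T.isBridge i = false).card = T.n + 1 := by
  have := Finset.card_filter_add_card_filter_not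
    (s := (univ : Finset (Fin (T.n + 1)))) (p := fun i => T.isBridge i = true)
  simpa [Bool.not_eq_true] using this

lemma card_label_le (i : Fin (T.n + 1)) : (T.label i).card ≤ 3 := by
  rcases Bool.eq_false_or_eq_true (T.isBridge i) with h | h
  · exact (T.bridge_card i h).le.trans (by norm_num)
  · exact le_of_eq (T.lake_card i h)

lemma compl_nonempty (i : Fin (T.n + 1)) : ((univ : Finset (Fin 4)) \ T.label i).Nonempty := by
  rw [← Finset.card_pos, card_sdiff_of_subset (subset_univ _)]
  have := T.card_label_le i
  simp only [card_univ, Fintype.card_fin]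
  omega

/-- the unique island not on lake `i` (junk for bridges) -/
def co (i : Fin (T.n + 1)) : Fin 4 := ((univ : Finset (Fin 4)) \ T.label i).min' (T.compl_nonempty i)

lemma co_not_mem (i : Fin (T.n + 1)) : T.co i ∉ T.label i := by
  have := Finset.min'_mem _ (T.compl_nonempty i)
  simp only [mem_sdiff] at this
  exact this.2

lemma lake_eq (j : Fin (T.n + 1)) (hj : T.isBridge j = false) :
    T.label j = (univ : Finset (Fin 4)) \ {T.co j} := by
  apply Finset.eq_of_subset_of_card_le
  · intro x hx
    simp only [mem_sdiff, mem_univ, mem_singleton, true_and]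
    rintro rfl; exact T.co_not_mem j hx
  · rw [card_sdiff_of_subset (by simp), T.lake_card j hj]
    simp

lemma co_mem_bridge (i j : Fin (T.n + 1)) (hi : T.isBridge i = true)
    (hj : T.isBridge j = false) : T.co j ∈ T.label i := by
  by_contra h
  apply T.no_bridge_in_lake i j hi hj
  rw [T.lake_eq j hj]
  intro x hx
  simp only [mem_sdiff, mem_univ, mem_singleton, true_and]
  rintro rfl; exact h hx

lemma co_injOn {j1 j2 : Fin (T.n + 1)} (h1 : T.isBridge j1 = false)
    (h2 : T.isBridge j2 = false) (h : T.co j1 = T.co j2) : j1 = j2 := by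
  apply T.label_injective
  rw [T.lake_eq j1 h1, T.lake_eq j2 h2, h]

lemma label_pair (i : Fin (T.n + 1)) (hi : T.isBridge i = true) :
    T.label i = {T.src i, T.src (i + 1)} := by
  symm
  apply Finset.eq_of_subset_of_card_le
  · intro x hx
    rcases mem_insert.mp hx with rfl | hx
    · exact T.src_mem i
    · rw [mem_singleton.mp hx]; exact T.dst_mem i
  · rw [T.bridge_card i hi, card_pair (T.step_ne i)]

lemma shift_card (v : Fin 4) :
    (univ.filter fun i => T.src i = v).card = (univ.filter fun i => T.src (i + 1) = v).card := by
  apply Finset.card_bij' (fun i _ => i - 1) (fun j _ => j + 1)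
  · intro a _
    simp
  · intro a _
    simp
  · intro a ha
    simp only [mem_filter, mem_univ, true_and] at ha ⊢
    have h : a - 1 + 1 = a := by simp
    rw [h]
    exact ha
  · intro a ha
    simp only [mem_filter, mem_univ, true_and] at ha ⊢
    exact ha

lemma deg_even (v : Fin 4) :
    ∑ i : Fin (T.n + 1), ((if T.src i = v then 1 else 0) + (if T.src (i + 1) = v then 1 else 0))
      = 2 * (univ.filter fun i => T.src i = v).card := by
  rw [Finset.sum_add_distrib, ← Finset.card_filter, ← Finset.card_filter, ← T.shift_card v]
  ring

lemma pair_count (i : Fin (T.n + 1)) (hi : T.isBridge i = true) (d : Fin 4)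
    (hd : d ∈ T.label i) :
    (if T.src i = d then (1 : ℕ) else 0) + (if T.src (i + 1) = d then 1 else 0) = 1 := by
  rw [T.label_pair i hi, mem_insert, mem_singleton] at hd
  have hne := T.step_ne i
  rcases hd with rfl | rfl
  · simp [Ne.symm hne]
  · simp [hne]

lemma bridges_card_le (d : Fin 4) :
    (univ.filter fun i => T.isBridge i = true ∧ d ∈ T.label i).card ≤ 3 := by
  have key : ∀ d : Fin 4, (((univ : Finset (Fin 4)).powersetCard 2).filter fun s => d ∈ s).card = 3 := by decide
  rw [← key d]
  apply Finset.card_le_card_of_injOn T.label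
  · intro i hi
    simp only [mem_coe, mem_filter, mem_univ, true_and, mem_powersetCard] at *
    exact ⟨⟨subset_univ _, T.bridge_card i hi.1⟩, hi.2⟩
  · exact fun a _ b _ h => T.label_injective h

end ElemBoundaryTrail

/-- Any elementary boundary trail crossing exactly `m` bridges and exactly `n`
lakes satisfies `(m, n) ∈ {(4,0), (3,0), (2,1), (1,2), (0,2), (0,3), (0,4)}`. -/


theorem elemBoundaryTrail_type_mem (T : ElemBoundaryTrail) :
    (T.bridgeCount, T.lakeCount) ∈
      ({(4, 0), (3, 0), (2, 1), (1, 2), (0, 2), (0, 3), (0, 4)} :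
        Finset (ℕ × ℕ)) := by
  open Finset ElemBoundaryTrail in
  have hBdef : T.bridgeCount = (Finset.univ.filter fun i => T.isBridge i = true).card := rfl
  have hLdef : T.lakeCount = (Finset.univ.filter fun i => T.isBridge i = false).card := rfl
  have hsteps : T.bridgeCount + T.lakeCount = T.n + 1 := T.steps_eq
  -- step_ne rules out a single-step trail
  have hn_ne0 : T.n + 1 ≠ 1 := by
    intro hn
    have hn0 : T.n = 0 := by omega
    have h01 : (0 : Fin (T.n + 1)) + 1 = 0 := by
      apply Fin.ext
      simp [Fin.add_def, Fin.val_one', hn0]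
    exact T.step_ne 0 (by rw [h01])
  by_cases hm0 : T.bridgeCount = 0
  -- no bridges: l = n+1, 2 ≤ l ≤ 4
  · have hl_eq : T.lakeCount = T.n + 1 := by omega
    have hl4 : T.lakeCount ≤ 4 := by
      rw [hLdef]
      have key : ((Finset.univ : Finset (Fin 4)).powersetCard 3).card = 4 := by decide
      rw [← key]
      apply Finset.card_le_card_of_injOn T.label
      · intro i hi
        simp only [Finset.mem_coe, Finset.mem_filter, Finset.mem_univ, true_and, Finset.mem_powersetCard] at *
        exact ⟨Finset.subset_univ _, T.lake_card i hi⟩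
      · exact fun a _ b _ h => T.label_injective h
    have : T.lakeCount = 2 ∨ T.lakeCount = 3 ∨ T.lakeCount = 4 := by omega
    rcases this with h | h | h <;> rw [hm0, h] <;> decide
  -- at least one bridge
  · obtain ⟨i0, hi0⟩ : ∃ i, T.isBridge i = true := by
      have : (Finset.univ.filter fun i => T.isBridge i = true).Nonempty := by
        rw [← Finset.card_pos, ← hBdef]; omega
      obtain ⟨i0, hi0⟩ := this
      exact ⟨i0, (Finset.mem_filter.mp hi0).2⟩
    -- at most two lakes
    have hl2 : T.lakeCount ≤ 2 := by
      have h1 : T.lakeCount ≤ (T.label i0).card := by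
        rw [hLdef]
        apply Finset.card_le_card_of_injOn T.co
        · intro j hj
          exact T.co_mem_bridge i0 j hi0 (Finset.mem_filter.mp hj).2
        · intro a ha b hb h
          exact T.co_injOn (Finset.mem_filter.mp ha).2 (Finset.mem_filter.mp hb).2 h
      rwa [T.bridge_card i0 hi0] at h1
    have hcases : T.lakeCount = 0 ∨ T.lakeCount = 1 ∨ T.lakeCount = 2 := by omega
    rcases hcases with hl | hl | hl
    -- l = 0 : all steps are bridges, show m ∈ {3, 4}
    · have hall : ∀ i, T.isBridge i = true := by
        intro i
        rcases Bool.eq_false_or_eq_true (T.isBridge i) with h | h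
        · exact h
        · exfalso
          have : i ∈ (Finset.univ.filter fun i => T.isBridge i = false) := by
            simp [h]
          rw [hLdef, Finset.card_eq_zero] at hl
          simp [hl] at this
      have hm_eq : T.bridgeCount = T.n + 1 := by omega
      -- m ≤ 4 by parity
      have hdeg : ∀ v : Fin 4, (Finset.univ.filter fun i => v ∈ T.label i).card ≤ 2 := by
        intro v
        have h3 : (Finset.univ.filter fun i => v ∈ T.label i).card ≤ 3 := by
          have hsub : (Finset.univ.filter fun i => v ∈ T.label i) ⊆
              (Finset.univ.filter fun i => T.isBridge i = true ∧ v ∈ T.label i) := by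
            intro i hi
            simp only [Finset.mem_filter, Finset.mem_univ, true_and] at *
            exact ⟨hall i, hi⟩
          exact le_trans (Finset.card_le_card hsub) (T.bridges_card_le v)
        have heven : (Finset.univ.filter fun i => v ∈ T.label i).card
            = 2 * (Finset.univ.filter fun i => T.src i = v).card := by
          rw [Finset.card_filter, ← T.deg_even v]
          apply Finset.sum_congr rfl
          intro i _
          by_cases hv : v ∈ T.label i
          · rw [if_pos hv, T.pair_count i (hall i) v hv]
          · rw [if_neg hv]
            have h1 : T.src i ≠ v := fun h => hv (h ▸ T.src_mem i)
            have h2 : T.src (i + 1) ≠ v := fun h => hv (h ▸ T.dst_mem i)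
            simp [h1, h2]
        omega
      have hsum : ∑ v : Fin 4, (Finset.univ.filter fun i => v ∈ T.label i).card
          = 2 * (T.n + 1) := by
        have h1 : ∀ v : Fin 4, (Finset.univ.filter fun i => v ∈ T.label i).card
            = ∑ i : Fin (T.n + 1), if v ∈ T.label i then 1 else 0 :=
          fun v => Finset.card_filter _ _
        simp only [h1]
        rw [Finset.sum_comm]
        have h2 : ∀ i : Fin (T.n + 1), (∑ v : Fin 4, if v ∈ T.label i then (1 : ℕ) else 0) = 2 := by
          intro i
          have h3 : (Finset.univ.filter fun v => v ∈ T.label i) = T.label i := by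
            ext x; simp
          rw [← Finset.card_filter, h3, T.bridge_card i (hall i)]
        rw [Finset.sum_congr rfl (fun i _ => h2 i), Finset.sum_const, Finset.card_univ,
          Fintype.card_fin, smul_eq_mul, mul_comm]
      have hle8 : 2 * (T.n + 1) ≤ 8 := by
        rw [← hsum]
        calc ∑ v : Fin 4, (Finset.univ.filter fun i => v ∈ T.label i).card
            ≤ ∑ _v : Fin 4, 2 := Finset.sum_le_sum fun v _ => hdeg v
          _ = 8 := by simp
      -- m ≠ 2
      have hm_ne2 : T.bridgeCount ≠ 2 := by
        intro hm2
        have hn1 : T.n = 1 := by omega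
        have h01 : (0 : Fin (T.n + 1)) + 1 = 1 := by rw [zero_add]
        have h11 : (1 : Fin (T.n + 1)) + 1 = 0 := by
          apply Fin.ext
          simp [Fin.add_def, Fin.val_one', hn1]
        have hne01 : (0 : Fin (T.n + 1)) ≠ 1 := by
          simp [Fin.ext_iff, Fin.val_one', hn1]
        apply hne01
        apply T.label_injective
        rw [T.label_pair 0 (hall 0), T.label_pair 1 (hall 1), h01, h11]
        exact Finset.pair_comm _ _
      rw [hBdef, hLdef] at *
      have : (Finset.univ.filter fun i => T.isBridge i = true).card = 3 ∨
          (Finset.univ.filter fun i => T.isBridge i = true).card = 4 := by omega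
      rcases this with h | h <;> rw [h, hl] <;> decide
    -- l = 1 : show m = 2
    · obtain ⟨j0, hj0⟩ := Finset.card_eq_one.mp (hLdef ▸ hl)
      have hj0b : T.isBridge j0 = false := by
        have : j0 ∈ (Finset.univ.filter fun i => T.isBridge i = false) := by
          rw [hj0]; exact Finset.mem_singleton_self j0
        exact (Finset.mem_filter.mp this).2
      have huniq : ∀ i, T.isBridge i = false → i = j0 := by
        intro i hi
        have : i ∈ (Finset.univ.filter fun i => T.isBridge i = false) := by simp [hi]
        rw [hj0] at this
        exact Finset.mem_singleton.mp this
      have hmsum : T.bridgeCount = 2 * (Finset.univ.filter fun i => T.src i = T.co j0).card := by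
        rw [hBdef, Finset.card_filter, ← T.deg_even (T.co j0)]
        apply Finset.sum_congr rfl
        intro i _
        rcases Bool.eq_false_or_eq_true (T.isBridge i) with hb | hb
        · rw [hb, if_pos rfl, T.pair_count i hb (T.co j0) (T.co_mem_bridge i j0 hb hj0b)]
        · have hij : i = j0 := huniq i hb
          subst hij
          have h1 : T.src i ≠ T.co i := fun h => T.co_not_mem i (h ▸ T.src_mem i)
          have h2 : T.src (i + 1) ≠ T.co i := fun h => T.co_not_mem i (h ▸ T.dst_mem i)
          simp [h1, h2, hb]
      have hm3 : T.bridgeCount ≤ 3 := by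
        rw [hBdef]
        have hsub : (Finset.univ.filter fun i => T.isBridge i = true) ⊆
            (Finset.univ.filter fun i => T.isBridge i = true ∧ T.co j0 ∈ T.label i) := by
          intro i hi
          simp only [Finset.mem_filter, Finset.mem_univ, true_and] at *
          exact ⟨hi, T.co_mem_bridge i j0 hi hj0b⟩
        exact le_trans (Finset.card_le_card hsub) (T.bridges_card_le (T.co j0))
      have hm2 : T.bridgeCount = 2 := by omega
      rw [hm2, hl]; decide
    -- l = 2 : show m = 1
    · obtain ⟨j1, j2, hne, hj12⟩ := Finset.card_eq_two.mp (hLdef ▸ hl)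
      have hb1 : T.isBridge j1 = false := by
        have : j1 ∈ (Finset.univ.filter fun i => T.isBridge i = false) := by
          rw [hj12]; simp
        exact (Finset.mem_filter.mp this).2
      have hb2 : T.isBridge j2 = false := by
        have : j2 ∈ (Finset.univ.filter fun i => T.isBridge i = false) := by
          rw [hj12]; simp
        exact (Finset.mem_filter.mp this).2
      have hd : T.co j1 ≠ T.co j2 := fun h => hne (T.co_injOn hb1 hb2 h)
      have hlab : ∀ i, T.isBridge i = true → T.label i = {T.co j1, T.co j2} := by
        intro i hi
        symm
        apply Finset.eq_of_subset_of_card_le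
        · intro x hx
          rcases Finset.mem_insert.mp hx with rfl | hx
          · exact T.co_mem_bridge i j1 hi hb1
          · rw [Finset.mem_singleton.mp hx]
            exact T.co_mem_bridge i j2 hi hb2
        · rw [T.bridge_card i hi, Finset.card_pair hd]
      have hm1 : T.bridgeCount ≤ 1 := by
        by_contra h
        push_neg at h
        obtain ⟨a, ha, b, hb, hab⟩ := Finset.one_lt_card.mp (hBdef ▸ h)
        apply hab
        apply T.label_injective
        rw [hlab a (Finset.mem_filter.mp ha).2, hlab b (Finset.mem_filter.mp hb).2]
      have : T.bridgeCount = 1 := by omega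
      rw [this, hl]; decide
end

section
/- For each pair (m,n) in the set {(4,0), (3,0), (2,1), (1,2), (0,2), (0,3), (0,4)} there exists an elementary boundary trail crossing exactly m bridges and exactly n lakes. -/
def mkTrail (n : ℕ) (src : Fin (n + 1) → Fin 4) (isBridge : Fin (n + 1) → Bool)
    (label : Fin (n + 1) → Finset (Fin 4))
    (h1 : ∀ i, isBridge i = true → (label i).card = 2 := by decide)
    (h2 : ∀ i, isBridge i = false → (label i).card = 3 := by decide)
    (h3 : ∀ i, src i ∈ label i := by decide)
    (h4 : ∀ i, src (i + 1) ∈ label i := by decide)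
    (h5 : ∀ i, src i ≠ src (i + 1) := by decide)
    (h6 : Function.Injective label := by decide)
    (h7 : ∀ i j, isBridge i = true → isBridge j = false → ¬ label i ⊆ label j := by decide) :
    ElemBoundaryTrail :=
  ⟨n, src, isBridge, label, h1, h2, h3, h4, h5, h6, h7⟩

def T40 : ElemBoundaryTrail :=
  mkTrail 3 ![0, 1, 2, 3] ![true, true, true, true] ![{0,1}, {1,2}, {2,3}, {3,0}]

def T30 : ElemBoundaryTrail :=
  mkTrail 2 ![0, 1, 2] ![true, true, true] ![{0,1}, {1,2}, {0,2}]

def T21 : ElemBoundaryTrail :=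
  mkTrail 2 ![0, 1, 2] ![true, true, false] ![{0,1}, {1,2}, {0,2,3}]

def T12 : ElemBoundaryTrail :=
  mkTrail 2 ![0, 1, 2] ![true, false, false] ![{0,1}, {1,2,3}, {0,2,3}]

def T02 : ElemBoundaryTrail :=
  mkTrail 1 ![0, 1] ![false, false] ![{0,1,2}, {0,1,3}]

def T03 : ElemBoundaryTrail :=
  mkTrail 2 ![0, 1, 2] ![false, false, false] ![{0,1,2}, {1,2,3}, {0,2,3}]

def T04 : ElemBoundaryTrail :=
  mkTrail 3 ![0, 1, 2, 3] ![false, false, false, false]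
    ![{0,1,2}, {1,2,3}, {2,3,0}, {3,0,1}]

/-- For each pair `(m, n)` in `{(4,0), (3,0), (2,1), (1,2), (0,2), (0,3), (0,4)}`
there exists an elementary boundary trail crossing exactly `m` bridges and
exactly `n` lakes. -/
theorem elemBoundaryTrail_type_realizable :
    ∀ p ∈ ({(4, 0), (3, 0), (2, 1), (1, 2), (0, 2), (0, 3), (0, 4)} :
        Finset (ℕ × ℕ)),
      ∃ T : ElemBoundaryTrail, T.bridgeCount = p.1 ∧ T.lakeCount = p.2 := by
  intro p hp
  fin_cases hp
  · exact ⟨T40, by decide, by decide⟩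
  · exact ⟨T30, by decide, by decide⟩
  · exact ⟨T21, by decide, by decide⟩
  · exact ⟨T12, by decide, by decide⟩
  · exact ⟨T02, by decide, by decide⟩
  · exact ⟨T03, by decide, by decide⟩
  · exact ⟨T04, by decide, by decide⟩
end

section
/- An elementary boundary trail that uses exactly one lake label uses at most two bridge labels, and each of its bridge labels contains the unique island not belonging to that lake. -/

lemma auxCardBridges (p : Fin 4) :
    (Finset.univ.filter
      (fun s : Finset (Fin 4) => s.card = 2 ∧ p ∈ s)).card = 3 := by
  revert p; decide

/-- An elementary boundary trail that uses exactly one lake label uses at most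
two bridge labels, and each of its bridge labels contains the unique island
not belonging to that lake (i.e. the complement of the lake, a single island,
is contained in every bridge label of the trail). -/
theorem elemBoundaryTrail_one_lake (T : ElemBoundaryTrail)
    (h : T.lakeCount = 1) :
    T.bridgeCount ≤ 2 ∧
      ∀ i j, T.isBridge i = true → T.isBridge j = false →
        (T.label j)ᶜ ⊆ T.label i := by
  classical
  obtain ⟨j0, hj0⟩ : ∃ j0, Finset.univ.filter (fun i => T.isBridge i = false) = {j0} :=
    Finset.card_eq_one.mp h
  have hj0lake : T.isBridge j0 = false := by
    have := Finset.mem_singleton_self j0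
    rw [← hj0, Finset.mem_filter] at this
    exact this.2
  have huniq : ∀ j, T.isBridge j = false → j = j0 := by
    intro j hj
    have : j ∈ Finset.univ.filter (fun i => T.isBridge i = false) := by
      simp [hj]
    rw [hj0, Finset.mem_singleton] at this
    exact this
  have hcompl : (T.label j0)ᶜ.card = 1 := by
    rw [Finset.card_compl, T.lake_card j0 hj0lake]
    rfl
  obtain ⟨p, hp⟩ := Finset.card_eq_one.mp hcompl
  have hpmem : ∀ i, T.isBridge i = true → p ∈ T.label i := by
    intro i hi
    have hns := T.no_bridge_in_lake i j0 hi hj0lake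
    rw [Finset.not_subset] at hns
    obtain ⟨x, hx1, hx2⟩ := hns
    have hx : x ∈ (T.label j0)ᶜ := Finset.mem_compl.mpr hx2
    rw [hp, Finset.mem_singleton] at hx
    subst hx
    exact hx1
  have hpnot : p ∉ T.label j0 := by
    have : p ∈ (T.label j0)ᶜ := by
      rw [hp]; exact Finset.mem_singleton_self p
    exact Finset.mem_compl.mp this
  constructor
  · -- bridgeCount ≤ 2
    have hle3 : T.bridgeCount ≤ 3 := by
      have := Finset.card_le_card_of_injOn T.label
        (s := Finset.univ.filter fun i => T.isBridge i = true)
        (t := Finset.univ.filter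
          (fun s : Finset (Fin 4) => s.card = 2 ∧ p ∈ s))
        (fun a ha => by
          rw [Finset.mem_coe, Finset.mem_filter] at ha
          exact Finset.mem_coe.mpr <| Finset.mem_filter.mpr
            ⟨Finset.mem_univ _, T.bridge_card a ha.2, hpmem a ha.2⟩)
        (fun a _ b _ hab => T.label_injective hab)
      rw [auxCardBridges p] at this
      exact this
    have key : ∀ i : Fin (T.n + 1),
        ((if T.src i = p then 1 else 0) + (if T.src (i+1) = p then 1 else 0) : ℕ)
          = if T.isBridge i = true then 1 else 0 := by
      intro i
      by_cases hb : T.isBridge i = true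
      · have h2 := T.bridge_card i hb
        have hsm := T.src_mem i
        have hdm := T.dst_mem i
        have hne := T.step_ne i
        have hlab : T.label i = {T.src i, T.src (i+1)} := by
          refine (Finset.eq_of_subset_of_card_le ?_ ?_).symm
          · intro x hx
            rw [Finset.mem_insert, Finset.mem_singleton] at hx
            rcases hx with rfl | rfl
            · exact hsm
            · exact hdm
          · rw [h2, Finset.card_insert_of_notMem (by simpa using hne),
              Finset.card_singleton]
        have hpin := hpmem i hb
        rw [hlab, Finset.mem_insert, Finset.mem_singleton] at hpin
        rcases hpin with rfl | rfl
        · rw [if_pos rfl, if_neg (fun hc => hne hc.symm), if_pos hb]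
        · rw [if_neg (fun hc => hne hc), if_pos rfl, if_pos hb]
      · have hlake : T.isBridge i = false := by
          simpa using hb
        have hij := huniq i hlake
        subst hij
        have h1 : T.src i ≠ p := fun hc => hpnot (hc ▸ T.src_mem i)
        have h2 : T.src (i+1) ≠ p := fun hc => hpnot (hc ▸ T.dst_mem i)
        rw [if_neg h1, if_neg h2, if_neg hb]
    have hshift : ∑ i : Fin (T.n + 1), (if T.src (i+1) = p then 1 else 0)
        = ∑ i : Fin (T.n + 1), (if T.src i = p then (1:ℕ) else 0) :=
      Fintype.sum_equiv (Equiv.addRight 1)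
        (fun i => if T.src (i+1) = p then 1 else 0)
        (fun i => if T.src i = p then 1 else 0)
        (fun i => rfl)
    have hsum : T.bridgeCount
        = 2 * ∑ i : Fin (T.n + 1), (if T.src i = p then 1 else 0) := by
      unfold ElemBoundaryTrail.bridgeCount
      rw [Finset.card_filter]
      calc ∑ i : Fin (T.n + 1), (if T.isBridge i = true then (1:ℕ) else 0)
          = ∑ i : Fin (T.n + 1),
            ((if T.src i = p then 1 else 0) + (if T.src (i+1) = p then 1 else 0)) :=
            Finset.sum_congr rfl (fun i _ => (key i).symm)
        _ = (∑ i : Fin (T.n + 1), (if T.src i = p then 1 else 0))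
            + ∑ i : Fin (T.n + 1), (if T.src (i+1) = p then 1 else 0) :=
            Finset.sum_add_distrib
        _ = 2 * ∑ i : Fin (T.n + 1), (if T.src i = p then 1 else 0) := by
            rw [hshift]; ring
    omega
  · intro i j hi hj
    have hji := huniq j hj
    subst hji
    rw [hp]
    exact Finset.singleton_subset_iff.mpr (hpmem i hi)
end

section
/- If an elementary boundary trail uses n distinct lake labels with n ≥ 2, then it uses at most one bridge label when n = 2 and no bridge label when n ≥ 3. -/
/-- If an elementary boundary trail uses `n` distinct lake labels with `n ≥ 2`,
then it uses at most one bridge label when `n = 2` and no bridge label when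
`n ≥ 3`. -/
theorem elemBoundaryTrail_many_lakes (T : ElemBoundaryTrail) (n : ℕ)
    (hn : T.lakeCount = n) (h2 : 2 ≤ n) :
    (n = 2 → T.bridgeCount ≤ 1) ∧ (3 ≤ n → T.bridgeCount = 0) := by
  -- For each lake step `j`, its label misses exactly one island `x`, and every
  -- bridge label in the trail must contain `x`.
  have key : ∀ j, T.isBridge j = false → ∃ x : Fin 4, (T.label j)ᶜ = {x} ∧
      ∀ i, T.isBridge i = true → x ∈ T.label i := by
    intro j hj
    have hc : (T.label j)ᶜ.card = 1 := by
      have h3 := T.lake_card j hj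
      simp [Finset.card_compl, h3]
    obtain ⟨x, hx⟩ := Finset.card_eq_one.mp hc
    refine ⟨x, hx, ?_⟩
    intro i hi
    obtain ⟨y, hy1, hy2⟩ := Finset.not_subset.mp (T.no_bridge_in_lake i j hi hj)
    have hmem : y ∈ (T.label j)ᶜ := Finset.mem_compl.mpr hy2
    rw [hx, Finset.mem_singleton] at hmem
    exact hmem ▸ hy1
  have ne_of_lakes : ∀ {j1 j2 x1 x2}, (T.label j1)ᶜ = {x1} → (T.label j2)ᶜ = {x2} →
      j1 ≠ j2 → x1 ≠ x2 := by
    intro j1 j2 x1 x2 h1 h2' hne heq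
    apply hne
    apply T.label_injective
    have : (T.label j1)ᶜ = (T.label j2)ᶜ := by rw [h1, h2', heq]
    exact compl_injective this
  set S := Finset.univ.filter fun i => T.isBridge i = false with hS
  have hScard : S.card = n := hn
  constructor
  · intro _
    have h1lt : 1 < S.card := by omega
    obtain ⟨j1, hj1, j2, hj2, hjne⟩ := Finset.one_lt_card.mp h1lt
    simp only [hS, Finset.mem_filter] at hj1 hj2
    obtain ⟨x1, hx1, hx1'⟩ := key j1 hj1.2
    obtain ⟨x2, hx2, hx2'⟩ := key j2 hj2.2
    have hx12 : x1 ≠ x2 := ne_of_lakes hx1 hx2 hjne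
    refine Finset.card_le_one.mpr ?_
    intro i hi i' hi'
    simp only [Finset.mem_filter] at hi hi'
    apply T.label_injective
    have heq : ∀ k, T.isBridge k = true → T.label k = {x1, x2} := by
      intro k hk
      have hsub : ({x1, x2} : Finset (Fin 4)) ⊆ T.label k := by
        intro z hz
        rcases Finset.mem_insert.mp hz with h | h
        · exact h ▸ hx1' k hk
        · exact (Finset.mem_singleton.mp h) ▸ hx2' k hk
      have hc2 : ({x1, x2} : Finset (Fin 4)).card = 2 := Finset.card_pair hx12
      exact (Finset.eq_of_subset_of_card_le hsub
        (by rw [T.bridge_card k hk, hc2])).symm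
    rw [heq i hi.2, heq i' hi'.2]
  · intro h3
    have h2lt : 2 < S.card := by omega
    obtain ⟨j1, j2, j3, hj1, hj2, hj3, h12, h13, h23⟩ :=
      Finset.two_lt_card_iff.mp h2lt
    simp only [hS, Finset.mem_filter] at hj1 hj2 hj3
    obtain ⟨x1, hx1, hx1'⟩ := key j1 hj1.2
    obtain ⟨x2, hx2, hx2'⟩ := key j2 hj2.2
    obtain ⟨x3, hx3, hx3'⟩ := key j3 hj3.2
    have hx12 : x1 ≠ x2 := ne_of_lakes hx1 hx2 h12
    have hx13 : x1 ≠ x3 := ne_of_lakes hx1 hx3 h13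
    have hx23 : x2 ≠ x3 := ne_of_lakes hx2 hx3 h23
    refine Finset.card_eq_zero.mpr (Finset.filter_eq_empty_iff.mpr ?_)
    intro i _
    intro hi
    have hsub : ({x1, x2, x3} : Finset (Fin 4)) ⊆ T.label i := by
      intro z hz
      rcases Finset.mem_insert.mp hz with h | h
      · exact h ▸ hx1' i hi
      rcases Finset.mem_insert.mp h with h' | h'
      · exact h' ▸ hx2' i hi
      · exact (Finset.mem_singleton.mp h') ▸ hx3' i hi
    have hc3 : ({x1, x2, x3} : Finset (Fin 4)).card = 3 := by
      rw [Finset.card_insert_of_notMem (by simp [hx12, hx13]),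
        Finset.card_pair hx23]
    have := Finset.card_le_card hsub
    rw [hc3, T.bridge_card i hi] at this
    omega
end
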